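/- Let θ̲ < θ̄ and let A : ℝ → ℝ be differentiable with sup_{θ ∈ [θ̲, θ̄]} |A'(θ)| < ∞, and fix θ* ∈ [θ̲, θ̄]. Let (Ω, ℱ, 𝐏) be a probability space with filtration (ℱ_n)_{n ≥ 1}; let (ξ_n)_{n ≥ 1} be identically distributed, square-integrable real random variables adapted to (ℱ_n) with 𝐄[ξ₁] = 0, let (X_n)_{n ≥ 1} be {0,1}-valued random variables adapted to (ℱ_n), and suppose that for each n, ξ_n is independent of the σ-algebra generated by ℱ_{n-1} together with X_n. Define ψ_n := 𝐏(X_n = 1 | ℱ_{n-1}), Ψ_n := Σ_{ℓ=1}^{n} ψ_ℓ, and for θ ∈ [θ̲, θ̄] define Λ_n(θ) := Σ_{ℓ=1}^{n} X_ℓ·( d(θ*, θ) + (θ* - θ)·ξ_ℓ ) (the log-likelihood ratio of θ* against θ in the exponential family). Then with probability 1: (i) on the event that Ψ_n → ∞, sup_{θ ∈ [θ̲, θ̄]} Ψ_n^{-1}·| Λ_n(θ) - Ψ_n·d(θ*, θ) | → 0 as n → ∞; and (ii) on the event that lim_{n → ∞} Ψ_n < ∞, sup_{θ ∈ [θ̲,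 θ̄]} sup_{n} ( |Λ_n(θ)| + Ψ_n·d(θ*, θ) ) < ∞. -/

import Mathlib

open MeasureTheory ProbabilityTheory Filter Topology

/-- Kullback–Leibler divergence in a one-dimensional exponential family with
log-partition function `A`: `d(θ, x) = (θ - x)·A'(θ) - A(θ) + A(x)`. -/
noncomputable def dKL (A : ℝ → ℝ) (θ x : ℝ) : ℝ := (θ - x) * deriv A θ - A θ + A x

section Aux

lemma aux_int_mul_L2 {Ω : Type*} {m0 : MeasurableSpace Ω} {μ : Measure Ω}
    {f g : Ω → ℝ} (hf : MemLp f 2 μ) (hg : MemLp g 2 μ) :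
    Integrable (fun ω => f ω * g ω) μ := by
  refine Integrable.mono' (g := fun ω => (f ω ^ 2 + g ω ^ 2) / 2)
    ((hf.integrable_sq.add hg.integrable_sq).div_const 2)
    (hf.aestronglyMeasurable.mul hg.aestronglyMeasurable) ?_
  filter_upwards with ω
  simp only [Real.norm_eq_abs, abs_mul]
  nlinarith [sq_nonneg (|f ω| - |g ω|), sq_abs (f ω), sq_abs (g ω), abs_nonneg (f ω),
    abs_nonneg (g ω)]

lemma aux_l2_martingale {Ω : Type*} {m0 : MeasurableSpace Ω} (μ : Measure Ω)
    [IsProbabilityMeasure μ] (ℱ : Filtration ℕ m0) (d : ℕ → Ω → ℝ)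
    (hmeas : ∀ n, StronglyMeasurable[ℱ (n+1)] (d n))
    (hL2 : ∀ n, MemLp (d n) 2 μ)
    (hcond : ∀ n, μ[d n | ℱ n] =ᵐ[μ] 0)
    (K : ℝ) (hK : ∀ n, ∑ ℓ ∈ Finset.range n, ∫ ω, (d ℓ ω)^2 ∂μ ≤ K) :
    ∀ᵐ ω ∂μ, ∃ c, Tendsto (fun n => ∑ ℓ ∈ Finset.range n, d ℓ ω) atTop (𝓝 c) := by
  set N : ℕ → Ω → ℝ := fun n ω => ∑ ℓ ∈ Finset.range n, d ℓ ω with hN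
  have hNsucc : ∀ n, N (n+1) = N n + fun ω => d n ω := by
    intro n; funext ω; simp [hN, Finset.sum_range_succ]
  have hNmeas : ∀ n, StronglyMeasurable[ℱ n] (N n) := by
    intro n
    apply Finset.stronglyMeasurable_fun_sum
    intro ℓ hℓ
    exact (hmeas ℓ).mono (ℱ.mono (Finset.mem_range.1 hℓ))
  have hNL2 : ∀ n, MemLp (N n) 2 μ := by
    intro n
    have h := memLp_finsetSum' (Finset.range n) (fun ℓ (_ : ℓ ∈ Finset.range n) => hL2 ℓ)
    have he : (∑ ℓ ∈ Finset.range n, d ℓ) = N n := by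
      funext ω; simp [hN, Finset.sum_apply]
    rwa [he] at h
  have hdint : ∀ n, Integrable (d n) μ := fun n => (hL2 n).integrable one_le_two
  have hNint : ∀ n, Integrable (N n) μ := fun n => (hNL2 n).integrable one_le_two
  have hmart : Martingale N ℱ μ := by
    refine martingale_nat hNmeas hNint (fun n => ?_)
    rw [hNsucc n]
    have h1 : μ[(N n + fun ω => d n ω)|ℱ n] =ᵐ[μ] μ[N n|ℱ n] + μ[(fun ω => d n ω)|ℱ n] :=
      condExp_add (hNint n) (hdint n) _
    have h2 : μ[N n|ℱ n] = N n := condExp_of_stronglyMeasurable (ℱ.le n) (hNmeas n) (hNint n)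
    filter_upwards [h1, hcond n] with ω hω₁ hω₂
    simp only [h2, Pi.add_apply] at hω₁
    simp [hω₁, hω₂]
  have horth : ∀ n, ∫ ω, N n ω * d n ω ∂μ = 0 := by
    intro n
    have hint : Integrable (N n * d n) μ := aux_int_mul_L2 (hNL2 n) (hL2 n)
    have h1 : μ[N n * d n|ℱ n] =ᵐ[μ] N n * μ[d n|ℱ n] :=
      condExp_mul_of_stronglyMeasurable_left (hNmeas n) hint (hdint n)
    have h2 : ∫ ω, (μ[N n * d n|ℱ n]) ω ∂μ = ∫ ω, (N n * d n) ω ∂μ := integral_condExp (ℱ.le n)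
    have h3 : N n * μ[d n|ℱ n] =ᵐ[μ] 0 := by
      filter_upwards [hcond n] with ω hω
      simp [hω]
    have h4 : ∫ ω, (N n * d n) ω ∂μ = ∫ ω, (0 : Ω → ℝ) ω ∂μ := by
      rw [← h2]
      exact integral_congr_ae (h1.trans h3)
    simpa using h4
  have hsq : ∀ n, ∫ ω, (N n ω)^2 ∂μ = ∑ ℓ ∈ Finset.range n, ∫ ω, (d ℓ ω)^2 ∂μ := by
    intro n
    induction n with
    | zero => simp [hN]
    | succ n ih =>
      have hexp : ∀ ω, (N (n+1) ω)^2 = (N n ω)^2 + (2 * (N n ω * d n ω) + (d n ω)^2) := by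
        intro ω
        have h : N (n+1) ω = N n ω + d n ω := by rw [hNsucc n]; rfl
        rw [h]; ring
      rw [Finset.sum_range_succ, ← ih]
      have hi1 : Integrable (fun ω => (N n ω)^2) μ := (hNL2 n).integrable_sq
      have hi2 : Integrable (fun ω => N n ω * d n ω) μ := aux_int_mul_L2 (hNL2 n) (hL2 n)
      have hi3 : Integrable (fun ω => (d n ω)^2) μ := (hL2 n).integrable_sq
      have e1 : ∫ ω, ((N n ω)^2 + (2 * (N n ω * d n ω) + (d n ω)^2)) ∂μ
          = ∫ ω, (N n ω)^2 ∂μ + ∫ ω, (2 * (N n ω * d n ω) + (d n ω)^2) ∂μ :=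
        integral_add hi1 ((hi2.const_mul 2).add hi3)
      have e2 : ∫ ω, (2 * (N n ω * d n ω) + (d n ω)^2) ∂μ
          = 2 * ∫ ω, N n ω * d n ω ∂μ + ∫ ω, (d n ω)^2 ∂μ := by
        rw [integral_add (hi2.const_mul 2) hi3, integral_const_mul]
      calc ∫ ω, (N (n+1) ω)^2 ∂μ
          = ∫ ω, ((N n ω)^2 + (2 * (N n ω * d n ω) + (d n ω)^2)) ∂μ :=
            integral_congr_ae (Filter.Eventually.of_forall (fun ω => hexp ω))
        _ = ∫ ω, (N n ω)^2 ∂μ + ∫ ω, (d n ω)^2 ∂μ := by rw [e1, e2, horth n]; ring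
  have hbdd : ∀ n, eLpNorm (N n) 1 μ ≤ ENNReal.ofReal ((1 + K)/2) := by
    intro n
    have h1 : eLpNorm (N n) 1 μ = ENNReal.ofReal (∫ ω, ‖N n ω‖ ∂μ) := by
      rw [eLpNorm_one_eq_lintegral_enorm, ← ofReal_integral_norm_eq_lintegral_enorm (hNint n)]
    rw [h1]
    apply ENNReal.ofReal_le_ofReal
    have hgi : Integrable (fun ω => (1 + (N n ω)^2)/2) μ :=
      ((integrable_const (1:ℝ)).add (hNL2 n).integrable_sq).div_const 2
    have h2 : ∫ ω, ‖N n ω‖ ∂μ ≤ ∫ ω, (1 + (N n ω)^2)/2 ∂μ := by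
      refine integral_mono (hNint n).norm hgi (fun ω => ?_)
      simp only [Real.norm_eq_abs]
      nlinarith [sq_nonneg (|N n ω| - 1), sq_abs (N n ω)]
    refine h2.trans ?_
    have h3 : ∫ ω, (1 + (N n ω)^2)/2 ∂μ = (1 + ∫ ω, (N n ω)^2 ∂μ)/2 := by
      rw [integral_div, integral_add (integrable_const 1) (hNL2 n).integrable_sq]
      simp [measure_univ]
    rw [h3]
    have h4 := (hsq n) ▸ hK n
    linarith
  exact hmart.submartingale.exists_ae_tendsto_of_bdd hbdd

lemma aux_kronecker (a b : ℕ → ℝ) (hb1 : ∀ n, 1 ≤ b n)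
    (hb : Tendsto b atTop atTop) (hΔ : ∀ n, b n ≤ b (n+1))
    (c : ℝ) (hconv : Tendsto (fun n => ∑ ℓ ∈ Finset.range n, a ℓ / b ℓ) atTop (𝓝 c)) :
    Tendsto (fun n => (∑ ℓ ∈ Finset.range n, a ℓ) / b n) atTop (𝓝 0) := by
  set C : ℕ → ℝ := fun n => ∑ ℓ ∈ Finset.range n, a ℓ / b ℓ with hC
  have hbpos : ∀ n, 0 < b n := fun n => lt_of_lt_of_le one_pos (hb1 n)
  have hbne : ∀ n, b n ≠ 0 := fun n => (hbpos n).ne'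
  have hid : ∀ n, ∑ ℓ ∈ Finset.range n, a ℓ
      = b n * C n - ∑ ℓ ∈ Finset.range n, (b (ℓ+1) - b ℓ) * C (ℓ+1) := by
    intro n
    induction n with
    | zero => simp [hC]
    | succ n ih =>
      rw [Finset.sum_range_succ, ih, Finset.sum_range_succ (fun ℓ => (b (ℓ+1) - b ℓ) * C (ℓ+1))]
      have hCn : C (n+1) = C n + a n / b n := by simp [hC, Finset.sum_range_succ]
      have hcan : b n * (a n / b n) = a n := by
        rw [mul_comm, div_mul_cancel₀ _ (hbne n)]
      rw [hCn]
      linear_combination -hcan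
  have key : Tendsto (fun n => (∑ ℓ ∈ Finset.range n, (b (ℓ+1) - b ℓ) * (C (ℓ+1) - c)) / b n)
      atTop (𝓝 0) := by
    rw [NormedAddCommGroup.tendsto_nhds_zero]
    intro ε hε
    obtain ⟨N, hN⟩ := (Metric.tendsto_atTop.1 hconv) (ε/4) (by positivity)
    set K0 := ∑ ℓ ∈ Finset.range N, (b (ℓ+1) - b ℓ) * |C (ℓ+1) - c| with hK0def
    have hK0 : 0 ≤ K0 := Finset.sum_nonneg fun ℓ _ =>
      mul_nonneg (by linarith [hΔ ℓ]) (abs_nonneg _)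
    have h1 : Tendsto (fun n => K0 / b n) atTop (𝓝 0) := Tendsto.div_atTop tendsto_const_nhds hb
    have h1' := (NormedAddCommGroup.tendsto_nhds_zero.1 h1) (ε/4) (by positivity)
    filter_upwards [h1', eventually_ge_atTop N] with n hn1 hn2
    have hK0bn : K0 / b n < ε/4 := by
      rwa [Real.norm_eq_abs, abs_of_nonneg (div_nonneg hK0 (hbpos n).le)] at hn1
    have habs : |∑ ℓ ∈ Finset.range n, (b (ℓ+1) - b ℓ) * (C (ℓ+1) - c)|
        ≤ K0 + b n * (ε/4) := by
      have hsplit : ∑ ℓ ∈ Finset.range n, (b (ℓ+1) - b ℓ) * (C (ℓ+1) - c)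
          = ∑ ℓ ∈ Finset.range N, (b (ℓ+1) - b ℓ) * (C (ℓ+1) - c)
            + ∑ ℓ ∈ Finset.Ico N n, (b (ℓ+1) - b ℓ) * (C (ℓ+1) - c) :=
        (Finset.sum_range_add_sum_Ico _ hn2).symm
      rw [hsplit]
      refine (abs_add_le _ _).trans (add_le_add ?_ ?_)
      · refine (Finset.abs_sum_le_sum_abs _ _).trans ?_
        apply Finset.sum_le_sum
        intro ℓ _
        rw [abs_mul, abs_of_nonneg (by linarith [hΔ ℓ] : (0:ℝ) ≤ b (ℓ+1) - b ℓ)]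
      · refine (Finset.abs_sum_le_sum_abs _ _).trans ?_
        have h2 : ∑ ℓ ∈ Finset.Ico N n, |(b (ℓ+1) - b ℓ) * (C (ℓ+1) - c)|
            ≤ ∑ ℓ ∈ Finset.Ico N n, (b (ℓ+1) - b ℓ) * (ε/4) := by
          apply Finset.sum_le_sum
          intro ℓ hℓ
          rw [abs_mul, abs_of_nonneg (by linarith [hΔ ℓ] : (0:ℝ) ≤ b (ℓ+1) - b ℓ)]
          have hℓN : N ≤ ℓ + 1 := le_trans (Finset.mem_Ico.1 hℓ).1 (Nat.le_succ ℓ)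
          have hd := hN (ℓ+1) hℓN
          rw [Real.dist_eq] at hd
          nlinarith [hΔ ℓ, abs_nonneg (C (ℓ+1) - c)]
        refine h2.trans ?_
        rw [← Finset.sum_mul]
        have htel : ∑ ℓ ∈ Finset.Ico N n, (b (ℓ+1) - b ℓ) = b n - b N := by
          have e1 := Finset.sum_range_add_sum_Ico (fun ℓ => b (ℓ+1) - b ℓ) hn2
          rw [Finset.sum_range_sub, Finset.sum_range_sub] at e1
          linarith
        rw [htel]
        nlinarith [hbpos N, hbpos n, hε.le]
    rw [Real.norm_eq_abs, abs_div, abs_of_pos (hbpos n), div_lt_iff₀ (hbpos n)]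
    have hK0' : K0 < ε/4 * b n := (div_lt_iff₀ (hbpos n)).1 hK0bn
    calc |∑ ℓ ∈ Finset.range n, (b (ℓ+1) - b ℓ) * (C (ℓ+1) - c)|
        ≤ K0 + b n * (ε/4) := habs
      _ < ε/4 * b n + b n * (ε/4) := by linarith
      _ ≤ ε * b n := by nlinarith [hbpos n, hε.le]
  have hb0 : Tendsto (fun n => b 0 * c / b n) atTop (𝓝 0) :=
    Tendsto.div_atTop tendsto_const_nhds hb
  have heq : ∀ n, (∑ ℓ ∈ Finset.range n, a ℓ) / b n
      = C n - (∑ ℓ ∈ Finset.range n, (b (ℓ+1) - b ℓ) * (C (ℓ+1) - c)) / b n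
        - c + b 0 * c / b n := by
    intro n
    have e1 : ∑ ℓ ∈ Finset.range n, (b (ℓ+1) - b ℓ) * C (ℓ+1)
        = ∑ ℓ ∈ Finset.range n, (b (ℓ+1) - b ℓ) * (C (ℓ+1) - c) + (b n - b 0) * c := by
      have h : ∀ ℓ, (b (ℓ+1) - b ℓ) * C (ℓ+1)
          = (b (ℓ+1) - b ℓ) * (C (ℓ+1) - c) + (b (ℓ+1) - b ℓ) * c := by intro ℓ; ring
      rw [Finset.sum_congr rfl (fun ℓ _ => h ℓ), Finset.sum_add_distrib, ← Finset.sum_mul,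
        Finset.sum_range_sub]
    rw [hid n, e1]
    field_simp [hbne n]
    ring
  have hfinal : Tendsto (fun n => C n
      - (∑ ℓ ∈ Finset.range n, (b (ℓ+1) - b ℓ) * (C (ℓ+1) - c)) / b n - c + b 0 * c / b n)
      atTop (𝓝 0) := by
    have h0 := ((hconv.sub key).sub
      (tendsto_const_nhds : Tendsto (fun _ : ℕ => c) atTop (𝓝 c))).add hb0
    have he : (c - 0 - c + 0 : ℝ) = 0 := by ring
    rw [he] at h0
    exact h0
  exact (funext heq : (fun n => (∑ ℓ ∈ Finset.range n, a ℓ) / b n) = _) ▸ hfinal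

lemma aux_weight_sum (p : ℕ → ℝ) (hp0 : ∀ ℓ, 0 ≤ p ℓ) (hp1 : ∀ ℓ, p ℓ ≤ 1) (n : ℕ) :
    ∑ ℓ ∈ Finset.range n, p ℓ * ((max 1 (1 + ∑ j ∈ Finset.range ℓ, p j))⁻¹)^2 ≤ 2 := by
  set B : ℕ → ℝ := fun ℓ => 1 + ∑ j ∈ Finset.range ℓ, p j with hB
  have hB1 : ∀ ℓ, 1 ≤ B ℓ := by
    intro ℓ
    have : (0:ℝ) ≤ ∑ j ∈ Finset.range ℓ, p j := Finset.sum_nonneg fun j _ => hp0 j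
    simp only [hB]; linarith
  have hBpos : ∀ ℓ, 0 < B ℓ := fun ℓ => lt_of_lt_of_le one_pos (hB1 ℓ)
  have hmax : ∀ ℓ, max 1 (1 + ∑ j ∈ Finset.range ℓ, p j) = B ℓ := fun ℓ => max_eq_right (hB1 ℓ)
  have hBs : ∀ ℓ, B (ℓ+1) = B ℓ + p ℓ := by
    intro ℓ; simp only [hB, Finset.sum_range_succ]; ring
  have key : ∀ m, ∑ ℓ ∈ Finset.range m, p ℓ * ((B ℓ)⁻¹)^2 ≤ 2 - 2 / B m := by
    intro m
    induction m with
    | zero => simp [hB]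
    | succ m ih =>
      rw [Finset.sum_range_succ]
      have h1 : p m * ((B m)⁻¹)^2 ≤ 2 / B m - 2 / B (m+1) := by
        have e : ∀ x y : ℝ, 0 < x → 0 ≤ y → 2/x - 2/(x+y) = 2*y/(x*(x+y)) := by
          intro x y hx hy
          have hx' : x ≠ 0 := hx.ne'
          have hxy : x + y ≠ 0 := by positivity
          field_simp
          ring
        have f : ∀ x y : ℝ, 1 ≤ x → 0 ≤ y → y ≤ 1 → y * (x⁻¹)^2 ≤ 2*y/(x*(x+y)) := by
          intro x y hx hy hy1
          have hx0 : 0 < x := lt_of_lt_of_le one_pos hx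
          have hxy : 0 < x + y := by linarith
          have h2 : y * (x⁻¹)^2 = y / x^2 := by
            rw [inv_pow, inv_eq_one_div]
            ring
          rw [h2, div_le_div_iff₀ (by positivity) (by positivity)]
          nlinarith [mul_nonneg (mul_nonneg hy hx0.le) (sub_nonneg.2 (hy1.trans hx))]
        rw [hBs m, e (B m) (p m) (hBpos m) (hp0 m)]
        exact f (B m) (p m) (hB1 m) (hp0 m) (hp1 m)
      linarith
  calc ∑ ℓ ∈ Finset.range n, p ℓ * ((max 1 (1 + ∑ j ∈ Finset.range ℓ, p j))⁻¹)^2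
      = ∑ ℓ ∈ Finset.range n, p ℓ * ((B ℓ)⁻¹)^2 := by
        refine Finset.sum_congr rfl fun ℓ _ => ?_
        rw [hmax ℓ]
    _ ≤ 2 - 2 / B n := key n
    _ ≤ 2 := by
        have := hBpos n
        have : 0 ≤ 2 / B n := by positivity
        linarith

end Aux

set_option maxHeartbeats 2000000 in
/-- Uniform convergence of the log-likelihood ratio
`Λ_n(θ) = Σ_ℓ X_ℓ (d(θ*, θ) + (θ* - θ) ξ_ℓ)` under adaptive sampling.
Sequences are 0-indexed: `ξ n`, `X n` play the roles of the paper's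
`ξ_{n+1}`, `X_{n+1}` (adapted to `ℱ (n+1)`), and
`ψ n = 𝐏(X_{n+1} = 1 | ℱ_n)`, `Ψ_n = Σ_{ℓ < n} ψ_ℓ`.
With probability 1: on the event `Ψ_n → ∞`,
`sup_{θ ∈ [θ̲,θ̄]} Ψ_n⁻¹ |Λ_n(θ) - Ψ_n d(θ*,θ)| → 0`; on the event
`lim Ψ_n < ∞`, `sup_θ sup_n (|Λ_n(θ)| + Ψ_n d(θ*,θ)) < ∞`. -/
theorem stmt_15 (lo hi : ℝ) (hlh : lo < hi) (A : ℝ → ℝ) (hA : Differentiable ℝ A)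
    (Cb : ℝ) (hC : ∀ θ ∈ Set.Icc lo hi, |deriv A θ| ≤ Cb)
    (θstar : ℝ) (hθstar : θstar ∈ Set.Icc lo hi)
    {Ω : Type*} [m0 : MeasurableSpace Ω] (μ : Measure Ω) [IsProbabilityMeasure μ]
    (ℱ : Filtration ℕ m0) (ξ X : ℕ → Ω → ℝ)
    (hξdist : ∀ n, Measure.map (ξ n) μ = Measure.map (ξ 0) μ)
    (hξL2 : ∀ n, MemLp (ξ n) 2 μ)
    (hξmean : ∫ ω, ξ 0 ω ∂μ = 0)
    (hξadapted : ∀ n, StronglyMeasurable[ℱ (n + 1)] (ξ n))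
    (hXadapted : ∀ n, StronglyMeasurable[ℱ (n + 1)] (X n))
    (hX01 : ∀ n ω, X n ω = 0 ∨ X n ω = 1)
    (hindep : ∀ n, Indep (MeasurableSpace.comap (ξ n) Real.measurableSpace)
      (ℱ n ⊔ MeasurableSpace.comap (X n) Real.measurableSpace) μ)
    (ψ : ℕ → Ω → ℝ)
    (hψ : ∀ n, ψ n = μ[Set.indicator {ω | X n ω = 1} (fun _ => (1 : ℝ)) | ℱ n]) :
    ∀ᵐ ω ∂μ,
      (Tendsto (fun n => ∑ ℓ ∈ Finset.range n, ψ ℓ ω) atTop atTop →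
        Tendsto (fun n => sSup ((fun θ =>
            |(∑ ℓ ∈ Finset.range n, X ℓ ω * (dKL A θstar θ + (θstar - θ) * ξ ℓ ω)) -
              (∑ ℓ ∈ Finset.range n, ψ ℓ ω) * dKL A θstar θ| /
            (∑ ℓ ∈ Finset.range n, ψ ℓ ω)) '' Set.Icc lo hi))
          atTop (nhds 0)) ∧
      ((∃ L : ℝ, Tendsto (fun n => ∑ ℓ ∈ Finset.range n, ψ ℓ ω) atTop (nhds L)) →
        ∃ B : ℝ, ∀ n : ℕ, ∀ θ ∈ Set.Icc lo hi,
          |∑ ℓ ∈ Finset.range n, X ℓ ω * (dKL A θstar θ + (θstar - θ) * ξ ℓ ω)| +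
            (∑ ℓ ∈ Finset.range n, ψ ℓ ω) * dKL A θstar θ ≤ B) := by
  -- ## constants
  obtain ⟨CA, hCA⟩ := (isCompact_Icc (a := lo) (b := hi)).exists_bound_of_continuousOn
    hA.continuous.continuousOn
  set D : ℝ := (hi - lo) * Cb + CA + CA with hDdef
  have hCb0 : 0 ≤ Cb := le_trans (abs_nonneg _) (hC θstar hθstar)
  have hKnn : 0 ≤ hi - lo := by linarith
  have hθdiff : ∀ θ ∈ Set.Icc lo hi, |θstar - θ| ≤ hi - lo := by
    intro θ hθ
    rcases hθstar with ⟨h2, h3⟩; rcases hθ with ⟨h4, h5⟩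
    rw [abs_le]; constructor <;> linarith
  have hDb : ∀ θ ∈ Set.Icc lo hi, |dKL A θstar θ| ≤ D := by
    intro θ hθ
    have h1 : |θstar - θ| ≤ hi - lo := hθdiff θ hθ
    have h2 : |deriv A θstar| ≤ Cb := hC θstar hθstar
    have h3 : |A θstar| ≤ CA := by
      have := hCA θstar hθstar; rwa [Real.norm_eq_abs] at this
    have h4 : |A θ| ≤ CA := by
      have := hCA θ hθ; rwa [Real.norm_eq_abs] at this
    show |(θstar - θ) * deriv A θstar - A θstar + A θ| ≤ D
    calc |(θstar - θ) * deriv A θstar - A θstar + A θ|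
        ≤ |(θstar - θ) * deriv A θstar - A θstar| + |A θ| := abs_add_le _ _
      _ ≤ |(θstar - θ) * deriv A θstar| + |A θstar| + |A θ| := by
          have := abs_add_le ((θstar - θ) * deriv A θstar) (-A θstar)
          rw [abs_neg] at this
          rw [sub_eq_add_neg]
          linarith
      _ ≤ (hi - lo) * Cb + CA + CA := by
          have h5 : |(θstar - θ) * deriv A θstar| ≤ (hi - lo) * Cb := by
            rw [abs_mul]
            exact mul_le_mul h1 h2 (abs_nonneg _) hKnn
          linarith
      _ = D := hDdef.symm
  have hD0 : 0 ≤ D := by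
    have h0 := hDb θstar hθstar
    exact le_trans (abs_nonneg _) h0
  -- ## basic measurability and integrability
  have hξm : ∀ n, Measurable (ξ n) := fun n => ((hξadapted n).mono (ℱ.le _)).measurable
  have hXm : ∀ n, Measurable (X n) := fun n => ((hXadapted n).mono (ℱ.le _)).measurable
  have hX0 : ∀ n ω, 0 ≤ X n ω := by
    intro n ω; rcases hX01 n ω with h | h <;> rw [h] <;> norm_num
  have hX1 : ∀ n ω, X n ω ≤ 1 := by
    intro n ω; rcases hX01 n ω with h | h <;> rw [h] <;> norm_num
  have hXsq : ∀ n ω, X n ω ^ 2 = X n ω := by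
    intro n ω; rcases hX01 n ω with h | h <;> rw [h] <;> norm_num
  have hXindicator : ∀ n, Set.indicator {ω | X n ω = 1} (fun _ => (1 : ℝ)) = X n := by
    intro n; funext ω
    rcases hX01 n ω with h | h <;>
      simp [Set.indicator_apply, Set.mem_setOf_eq, h]
  have hψeq : ∀ n, ψ n = μ[X n | ℱ n] := fun n => by rw [hψ n, hXindicator n]
  have hψm : ∀ n, StronglyMeasurable[ℱ n] (ψ n) := fun n => hψeq n ▸ stronglyMeasurable_condExp
  have hψint : ∀ n, Integrable (ψ n) μ := fun n => hψeq n ▸ integrable_condExp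
  have hXtop : ∀ n, MemLp (X n) ⊤ μ := by
    intro n
    refine memLp_top_of_bound (hXm n).aestronglyMeasurable 1 ?_
    filter_upwards with ω
    rw [Real.norm_eq_abs, abs_le]
    exact ⟨by linarith [hX0 n ω], hX1 n ω⟩
  have hXint : ∀ n, Integrable (X n) μ := fun n => (hXtop n).integrable le_top
  have hψ0 : ∀ n, (0 : Ω → ℝ) ≤ᵐ[μ] ψ n := by
    intro n
    rw [hψeq n]
    exact condExp_nonneg (Eventually.of_forall (hX0 n))
  have hψ1 : ∀ n, ψ n ≤ᵐ[μ] fun _ => (1 : ℝ) := by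
    intro n
    have h1 : μ[X n|ℱ n] ≤ᵐ[μ] μ[(fun _ => (1:ℝ))|ℱ n] :=
      condExp_mono (hXint n) (integrable_const 1) (Eventually.of_forall (hX1 n))
    have h2 : μ[(fun _ => (1:ℝ))|ℱ n] = fun _ => (1:ℝ) := condExp_const (ℱ.le n) 1
    rw [hψeq n]
    filter_upwards [h1] with ω hω
    rw [h2] at hω
    exact hω
  have hψae : ∀ᵐ ω ∂μ, ∀ n, 0 ≤ ψ n ω ∧ ψ n ω ≤ 1 := by
    rw [ae_all_iff]
    intro n
    filter_upwards [hψ0 n, hψ1 n] with ω h1 h2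
    exact ⟨h1, h2⟩
  -- ## weights
  set w : ℕ → Ω → ℝ := fun n ω => (max 1 (1 + ∑ j ∈ Finset.range n, ψ j ω))⁻¹ with hwdef
  have hb1 : ∀ n ω, 1 ≤ max 1 (1 + ∑ j ∈ Finset.range n, ψ j ω) := fun n ω => le_max_left _ _
  have hbpos : ∀ n ω, 0 < max 1 (1 + ∑ j ∈ Finset.range n, ψ j ω) :=
    fun n ω => lt_of_lt_of_le one_pos (hb1 n ω)
  have hw0 : ∀ n ω, 0 < w n ω := fun n ω => inv_pos.2 (hbpos n ω)
  have hw1 : ∀ n ω, w n ω ≤ 1 := fun n ω => inv_le_one_of_one_le₀ (hb1 n ω)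
  have hΨm : ∀ n, StronglyMeasurable[ℱ n] (fun ω => ∑ j ∈ Finset.range n, ψ j ω) := by
    intro n
    apply Finset.stronglyMeasurable_fun_sum
    intro j hj
    exact (hψm j).mono (ℱ.mono (Finset.mem_range.1 hj).le)
  have hwm : ∀ n, StronglyMeasurable[ℱ n] (w n) := by
    intro n
    have h1 : Measurable[ℱ n] (fun ω => max 1 (1 + ∑ j ∈ Finset.range n, ψ j ω)) :=
      measurable_const.max (measurable_const.add (hΨm n).measurable)
    exact (h1.inv).stronglyMeasurable
  have hwtop : ∀ n, MemLp (w n) ⊤ μ := by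
    intro n
    refine memLp_top_of_bound ((hwm n).mono (ℱ.le n)).aestronglyMeasurable 1 ?_
    filter_upwards with ω
    rw [Real.norm_eq_abs, abs_le]
    exact ⟨by linarith [hw0 n ω], hw1 n ω⟩
  -- ## increments
  set d1 : ℕ → Ω → ℝ := fun n ω => w n ω * (X n ω - ψ n ω) with hd1def
  set d2 : ℕ → Ω → ℝ := fun n ω => (X n ω * w n ω) * ξ n ω with hd2def
  have hd1meas : ∀ n, StronglyMeasurable[ℱ (n+1)] (d1 n) := by
    intro n
    exact ((hwm n).mono (ℱ.mono n.le_succ)).mul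
      ((hXadapted n).sub ((hψm n).mono (ℱ.mono n.le_succ)))
  have hd2meas : ∀ n, StronglyMeasurable[ℱ (n+1)] (d2 n) := by
    intro n
    exact ((hXadapted n).mul ((hwm n).mono (ℱ.mono n.le_succ))).mul (hξadapted n)
  have hd1L2 : ∀ n, MemLp (d1 n) 2 μ := by
    intro n
    refine (memLp_top_of_bound ?_ 2 ?_).mono_exponent le_top
    · exact (((hwm n).mono (ℱ.le n)).mul
        (((hXadapted n).mono (ℱ.le (n+1))).sub ((hψm n).mono (ℱ.le n)))).aestronglyMeasurable
    · filter_upwards [hψ0 n, hψ1 n] with ω h0 h1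
      have := hw0 n ω
      have := hw1 n ω
      have := hX0 n ω
      have := hX1 n ω
      rw [Real.norm_eq_abs, abs_mul, abs_of_pos (hw0 n ω)]
      have habs : |X n ω - ψ n ω| ≤ 2 := by
        rw [abs_le]
        constructor <;> simp only [Pi.zero_apply] at h0 <;> linarith
      nlinarith [abs_nonneg (X n ω - ψ n ω)]
  have hd2L2 : ∀ n, MemLp (d2 n) 2 μ := by
    intro n
    have hφ : MemLp (fun ω => X n ω * w n ω) ⊤ μ := by
      refine memLp_top_of_bound
        (((hXadapted n).mono (ℱ.le (n+1))).mul ((hwm n).mono (ℱ.le n))).aestronglyMeasurable 1 ?_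
      filter_upwards with ω
      rw [Real.norm_eq_abs, abs_mul, abs_of_nonneg (hX0 n ω), abs_of_pos (hw0 n ω)]
      nlinarith [hX0 n ω, hX1 n ω, hw0 n ω, hw1 n ω]
    exact (hξL2 n).mul' (p := ⊤) hφ
  -- ## conditional expectations vanish
  have hcond1 : ∀ n, μ[d1 n | ℱ n] =ᵐ[μ] 0 := by
    intro n
    have hint : Integrable (w n * (X n - ψ n)) μ :=
      ((hXint n).sub (hψint n)).bdd_mul ((hwm n).mono (ℱ.le n)).aestronglyMeasurable
        (c := 1) (Eventually.of_forall fun ω => by rw [Real.norm_eq_abs, abs_of_pos (hw0 n ω)]; exact hw1 n ω)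
    have h1 : μ[w n * (X n - ψ n)|ℱ n] =ᵐ[μ] w n * μ[X n - ψ n|ℱ n] :=
      condExp_mul_of_stronglyMeasurable_left (hwm n) hint ((hXint n).sub (hψint n))
    have h2 : μ[X n - ψ n|ℱ n] =ᵐ[μ] μ[X n|ℱ n] - μ[ψ n|ℱ n] := condExp_sub (hXint n) (hψint n) _
    have h3 : μ[ψ n|ℱ n] = ψ n := condExp_of_stronglyMeasurable (ℱ.le n) (hψm n) (hψint n)
    have hd1e : d1 n = w n * (X n - ψ n) := rfl
    rw [hd1e]
    filter_upwards [h1, h2] with ω hω1 hω2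
    simp only [Pi.mul_apply, Pi.sub_apply, Pi.zero_apply] at *
    rw [hω1, hω2, h3, ← hψeq n]
    simp
  have hGle : ∀ n, (ℱ n ⊔ MeasurableSpace.comap (X n) Real.measurableSpace) ≤ m0 :=
    fun n => sup_le (ℱ.le n) (hXm n).comap_le
  have hξG : ∀ n, μ[ξ n | ℱ n ⊔ MeasurableSpace.comap (X n) Real.measurableSpace]
      =ᵐ[μ] fun _ => 0 := by
    intro n
    have hmean : ∫ ω, ξ n ω ∂μ = 0 := by
      have h1 : ∫ x, x ∂(Measure.map (ξ n) μ) = ∫ ω, ξ n ω ∂μ :=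
        integral_map (hξm n).aemeasurable aestronglyMeasurable_id
      have h2 : ∫ x, x ∂(Measure.map (ξ 0) μ) = ∫ ω, ξ 0 ω ∂μ :=
        integral_map (hξm 0).aemeasurable aestronglyMeasurable_id
      rw [← h1, hξdist n, h2, hξmean]
    have hSM : StronglyMeasurable[MeasurableSpace.comap (ξ n) Real.measurableSpace] (ξ n) :=
      Measurable.stronglyMeasurable (measurable_iff_comap_le.2 le_rfl)
    have h := condExp_indep_eq (μ := μ) (f := ξ n) (hξm n).comap_le (hGle n) hSM (hindep n)
    rw [hmean] at h
    exact h
  have hcond2 : ∀ n, μ[d2 n | ℱ n] =ᵐ[μ] 0 := by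
    intro n
    set G := ℱ n ⊔ MeasurableSpace.comap (X n) Real.measurableSpace with hGdef
    have hXG : StronglyMeasurable[G] (X n) :=
      Measurable.stronglyMeasurable (measurable_iff_comap_le.2 le_sup_right)
    have hwG : StronglyMeasurable[G] (w n) := (hwm n).mono le_sup_left
    have hXwG : StronglyMeasurable[G] (fun ω => X n ω * w n ω) := hXG.mul hwG
    have hd2int : Integrable (d2 n) μ := (hd2L2 n).integrable one_le_two
    have hξint : Integrable (ξ n) μ := (hξL2 n).integrable one_le_two
    have hd2e : d2 n = (fun ω => X n ω * w n ω) * ξ n := rfl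
    have h1 : μ[(fun ω => X n ω * w n ω) * ξ n|G]
        =ᵐ[μ] (fun ω => X n ω * w n ω) * μ[ξ n|G] := by
      refine condExp_mul_of_stronglyMeasurable_left hXwG ?_ hξint
      rw [← hd2e]; exact hd2int
    have h2 : (fun ω => X n ω * w n ω) * μ[ξ n|G] =ᵐ[μ] 0 := by
      filter_upwards [hξG n] with ω hω
      simp only [Pi.mul_apply, Pi.zero_apply]
      rw [hω]
      ring
    have h3 : μ[d2 n|G] =ᵐ[μ] 0 := by rw [hd2e]; exact h1.trans h2
    have h4 : μ[μ[d2 n|G]|ℱ n] =ᵐ[μ] μ[d2 n|ℱ n] :=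
      condExp_condExp_of_le le_sup_left (hGle n)
    have h5 : μ[μ[d2 n|G]|ℱ n] =ᵐ[μ] μ[(0 : Ω → ℝ)|ℱ n] := condExp_congr_ae h3
    refine h4.symm.trans (h5.trans ?_)
    rw [condExp_zero]
  -- ## pull-out identity
  have hwsq : ∀ n, StronglyMeasurable[ℱ n] (fun ω => w n ω ^ 2) := by
    intro n
    have h : (fun ω => w n ω ^ 2) = fun ω => w n ω * w n ω := by
      funext ω; ring
    rw [h]
    exact (hwm n).mul (hwm n)
  have hwsqbd : ∀ n, ∃ C, ∀ ω, ‖w n ω ^ 2‖ ≤ C := by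
    intro n
    refine ⟨1, fun ω => ?_⟩
    rw [Real.norm_eq_abs, abs_of_pos (by positivity : (0:ℝ) < w n ω ^ 2)]
    nlinarith [hw0 n ω, hw1 n ω]
  have hintwX : ∀ n, Integrable (fun ω => w n ω ^ 2 * X n ω) μ := fun n =>
    (hXint n).bdd_mul ((hwsq n).mono (ℱ.le n)).aestronglyMeasurable (Eventually.of_forall (hwsqbd n).choose_spec)
  have hintwψ : ∀ n, Integrable (fun ω => w n ω ^ 2 * ψ n ω) μ := fun n =>
    (hψint n).bdd_mul ((hwsq n).mono (ℱ.le n)).aestronglyMeasurable (Eventually.of_forall (hwsqbd n).choose_spec)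
  have hpull : ∀ n, ∫ ω, w n ω ^ 2 * X n ω ∂μ = ∫ ω, w n ω ^ 2 * ψ n ω ∂μ := by
    intro n
    have h1 : μ[(fun ω => w n ω ^ 2) * X n|ℱ n] =ᵐ[μ] (fun ω => w n ω ^ 2) * μ[X n|ℱ n] :=
      condExp_mul_of_stronglyMeasurable_left (hwsq n) (hintwX n) (hXint n)
    have h2 : ∫ ω, (μ[(fun ω => w n ω ^ 2) * X n|ℱ n]) ω ∂μ
        = ∫ ω, ((fun ω => w n ω ^ 2) * X n) ω ∂μ := integral_condExp (ℱ.le n)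
    calc ∫ ω, w n ω ^ 2 * X n ω ∂μ
        = ∫ ω, (μ[(fun ω => w n ω ^ 2) * X n|ℱ n]) ω ∂μ := h2.symm
      _ = ∫ ω, ((fun ω => w n ω ^ 2) * μ[X n|ℱ n]) ω ∂μ := integral_congr_ae h1
      _ = ∫ ω, w n ω ^ 2 * ψ n ω ∂μ := by
          rw [← hψeq n]; rfl
  -- ## sum of weighted variances is bounded
  have hIsum : ∀ n, ∑ ℓ ∈ Finset.range n, ∫ ω, w ℓ ω ^ 2 * ψ ℓ ω ∂μ ≤ 2 := by
    intro n
    rw [← integral_finset_sum _ (fun ℓ _ => hintwψ ℓ)]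
    have h2 : ∫ ω, (2:ℝ) ∂μ = 2 := by simp
    rw [← h2]
    refine integral_mono_ae (integrable_finset_sum _ (fun ℓ _ => hintwψ ℓ))
      (integrable_const 2) ?_
    filter_upwards [hψae] with ω h01
    have := aux_weight_sum (fun ℓ => ψ ℓ ω) (fun ℓ => (h01 ℓ).1) (fun ℓ => (h01 ℓ).2) n
    calc ∑ ℓ ∈ Finset.range n, w ℓ ω ^ 2 * ψ ℓ ω
        = ∑ ℓ ∈ Finset.range n, ψ ℓ ω * ((max 1 (1 + ∑ j ∈ Finset.range ℓ, ψ j ω))⁻¹)^2 := by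
          refine Finset.sum_congr rfl fun ℓ _ => ?_
          rw [hwdef]
          ring
      _ ≤ 2 := this
  -- ## second moment bounds
  have hm1 : ∀ n, ∫ ω, (d1 n ω)^2 ∂μ ≤ 4 * ∫ ω, w n ω ^ 2 * ψ n ω ∂μ := by
    intro n
    have hptwise : ∀ᵐ ω ∂μ, (d1 n ω)^2 ≤ 2 * (w n ω ^ 2 * X n ω) + 2 * (w n ω ^ 2 * ψ n ω) := by
      filter_upwards [hψae] with ω h01
      have h0 := (h01 n).1
      have h1 := (h01 n).2
      have hX := hXsq n ω
      have hw2 : (0:ℝ) ≤ w n ω ^ 2 := by positivity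
      have : (d1 n ω)^2 = w n ω ^ 2 * (X n ω - ψ n ω)^2 := by
        rw [hd1def]; ring
      rw [this]
      have hsq2 : (X n ω - ψ n ω)^2 ≤ 2 * X n ω + 2 * ψ n ω := by
        nlinarith [sq_nonneg (X n ω + ψ n ω), hX0 n ω, hX1 n ω]
      nlinarith [mul_le_mul_of_nonneg_left hsq2 hw2]
    have hrhsint : Integrable
        (fun ω => 2 * (w n ω ^ 2 * X n ω) + 2 * (w n ω ^ 2 * ψ n ω)) μ :=
      ((hintwX n).const_mul 2).add ((hintwψ n).const_mul 2)
    calc ∫ ω, (d1 n ω)^2 ∂μ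
        ≤ ∫ ω, (2 * (w n ω ^ 2 * X n ω) + 2 * (w n ω ^ 2 * ψ n ω)) ∂μ :=
          integral_mono_ae (hd1L2 n).integrable_sq hrhsint hptwise
      _ = 2 * ∫ ω, w n ω ^ 2 * X n ω ∂μ + 2 * ∫ ω, w n ω ^ 2 * ψ n ω ∂μ := by
          rw [integral_add ((hintwX n).const_mul 2) ((hintwψ n).const_mul 2),
            integral_const_mul, integral_const_mul]
      _ = 4 * ∫ ω, w n ω ^ 2 * ψ n ω ∂μ := by rw [hpull n]; ring
  set σ2 : ℝ := ∫ ω, (ξ 0 ω)^2 ∂μ with hσ2def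
  have hσ2nn : 0 ≤ σ2 := integral_nonneg (fun ω => sq_nonneg _)
  have hξsqint : ∀ n, Integrable (fun ω => (ξ n ω)^2) μ := fun n => (hξL2 n).integrable_sq
  have hξsqeq : ∀ n, ∫ ω, (ξ n ω)^2 ∂μ = σ2 := by
    intro n
    have hf : AEStronglyMeasurable (fun x : ℝ => x^2) (Measure.map (ξ n) μ) :=
      (continuous_pow 2).aestronglyMeasurable
    have hf0 : AEStronglyMeasurable (fun x : ℝ => x^2) (Measure.map (ξ 0) μ) :=
      (continuous_pow 2).aestronglyMeasurable
    have h1 : ∫ x, x^2 ∂(Measure.map (ξ n) μ) = ∫ ω, (ξ n ω)^2 ∂μ :=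
      integral_map (hξm n).aemeasurable hf
    have h2 : ∫ x, x^2 ∂(Measure.map (ξ 0) μ) = ∫ ω, (ξ 0 ω)^2 ∂μ :=
      integral_map (hξm 0).aemeasurable hf0
    rw [hσ2def, ← h1, hξdist n, h2]
  have hm2 : ∀ n, ∫ ω, (d2 n ω)^2 ∂μ = σ2 * ∫ ω, w n ω ^ 2 * ψ n ω ∂μ := by
    intro n
    have hφmG : Measurable[ℱ n ⊔ MeasurableSpace.comap (X n) Real.measurableSpace]
        (fun ω => w n ω ^ 2 * X n ω) := by
      have hwG : Measurable[ℱ n ⊔ MeasurableSpace.comap (X n) Real.measurableSpace] (w n) :=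
        (hwm n).measurable.mono le_sup_left le_rfl
      have hXG : Measurable[ℱ n ⊔ MeasurableSpace.comap (X n) Real.measurableSpace] (X n) :=
        measurable_iff_comap_le.2 le_sup_right
      exact (hwG.pow_const 2).mul hXG
    have hle1 : MeasurableSpace.comap (fun ω => (ξ n ω)^2) Real.measurableSpace
        ≤ MeasurableSpace.comap (ξ n) Real.measurableSpace := by
      have he : (fun ω => (ξ n ω)^2) = (fun x : ℝ => x^2) ∘ ξ n := rfl
      rw [he, ← MeasurableSpace.comap_comp]
      exact MeasurableSpace.comap_mono (measurable_id.pow_const 2).comap_le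
    have hIF : IndepFun (fun ω => (ξ n ω)^2) (fun ω => w n ω ^ 2 * X n ω) μ :=
      indep_of_indep_of_le_left (indep_of_indep_of_le_right (hindep n) hφmG.comap_le) hle1
    have hφint : Integrable (fun ω => w n ω ^ 2 * X n ω) μ := hintwX n
    have hprod := IndepFun.integral_mul_eq_mul_integral hIF (hξsqint n).aestronglyMeasurable
      hφint.aestronglyMeasurable
    have he2 : ∀ ω, (d2 n ω)^2 = (ξ n ω)^2 * (w n ω ^ 2 * X n ω) := by
      intro ω
      have hX := hXsq n ω
      rw [hd2def]
      linear_combination (w n ω ^ 2 * ξ n ω ^ 2) * hX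
    calc ∫ ω, (d2 n ω)^2 ∂μ
        = ∫ ω, ((fun ω => (ξ n ω)^2) * fun ω => w n ω ^ 2 * X n ω) ω ∂μ :=
          integral_congr_ae (Eventually.of_forall (fun ω => he2 ω))
      _ = (∫ ω, (ξ n ω)^2 ∂μ) * ∫ ω, w n ω ^ 2 * X n ω ∂μ := hprod
      _ = σ2 * ∫ ω, w n ω ^ 2 * ψ n ω ∂μ := by rw [hξsqeq n, hpull n]
  -- ## martingale convergence
  have hK1 : ∀ n, ∑ ℓ ∈ Finset.range n, ∫ ω, (d1 ℓ ω)^2 ∂μ ≤ 8 := by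
    intro n
    calc ∑ ℓ ∈ Finset.range n, ∫ ω, (d1 ℓ ω)^2 ∂μ
        ≤ ∑ ℓ ∈ Finset.range n, 4 * ∫ ω, w ℓ ω ^ 2 * ψ ℓ ω ∂μ :=
          Finset.sum_le_sum fun ℓ _ => hm1 ℓ
      _ = 4 * ∑ ℓ ∈ Finset.range n, ∫ ω, w ℓ ω ^ 2 * ψ ℓ ω ∂μ := by rw [Finset.mul_sum]
      _ ≤ 8 := by linarith [hIsum n]
  have hK2 : ∀ n, ∑ ℓ ∈ Finset.range n, ∫ ω, (d2 ℓ ω)^2 ∂μ ≤ σ2 * 2 := by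
    intro n
    calc ∑ ℓ ∈ Finset.range n, ∫ ω, (d2 ℓ ω)^2 ∂μ
        = σ2 * ∑ ℓ ∈ Finset.range n, ∫ ω, w ℓ ω ^ 2 * ψ ℓ ω ∂μ := by
          rw [Finset.mul_sum]
          exact Finset.sum_congr rfl fun ℓ _ => hm2 ℓ
      _ ≤ σ2 * 2 := mul_le_mul_of_nonneg_left (hIsum n) hσ2nn
  have hA1 := aux_l2_martingale μ ℱ d1 hd1meas hd1L2 hcond1 8 hK1
  have hA2 := aux_l2_martingale μ ℱ d2 hd2meas hd2L2 hcond2 (σ2 * 2) hK2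
  -- ## Lévy's Borel–Cantelli
  have hBCae : ∀ᵐ ω ∂μ, Tendsto (fun n => ∑ ℓ ∈ Finset.range n, X ℓ ω) atTop atTop ↔
      Tendsto (fun n => ∑ ℓ ∈ Finset.range n, ψ ℓ ω) atTop atTop := by
    set s : ℕ → Set Ω := fun k => Nat.casesOn k ∅ (fun m => {ω | X m ω = 1}) with hsdef
    have hs : ∀ k, MeasurableSet[ℱ k] (s k) := by
      intro k
      cases k with
      | zero => exact @MeasurableSet.empty _ (ℱ 0)
      | succ m =>
        exact (hXadapted m).measurable (measurableSet_singleton 1)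
    filter_upwards [tendsto_sum_indicator_atTop_iff' (μ := μ) (ℱ := ℱ) hs] with ω hω
    have he1 : ∀ k, (s (k+1)).indicator (1 : Ω → ℝ) ω = X k ω := by
      intro k
      have : s (k+1) = {ω' | X k ω' = 1} := rfl
      rw [this, Set.indicator_apply]
      rcases hX01 k ω with h | h
      · rw [if_neg]
        · exact h.symm
        · simp only [Set.mem_setOf_eq, h]
          norm_num
      · rw [if_pos]
        · exact h.symm
        · exact h
    have he2 : ∀ k, (μ[(s (k+1)).indicator (1 : Ω → ℝ)|ℱ k]) ω = ψ k ω := by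
      intro k
      have h1 : (s (k+1)).indicator (1 : Ω → ℝ)
          = Set.indicator {ω' | X k ω' = 1} (fun _ => (1:ℝ)) := rfl
      rw [h1, ← hψ k]
    constructor
    · intro h
      have := hω.1 (by
        refine h.congr (fun n => Finset.sum_congr rfl fun k _ => (he1 k).symm))
      exact this.congr (fun n => Finset.sum_congr rfl fun k _ => he2 k)
    · intro h
      have := hω.2 (by
        refine h.congr (fun n => Finset.sum_congr rfl fun k _ => (he2 k).symm))
      exact this.congr (fun n => Finset.sum_congr rfl fun k _ => he1 k)
  -- ## combine
  filter_upwards [hA1, hA2, hBCae, hψae] with ω hc1 hc2 hbc h01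
  set Ψf : ℕ → ℝ := fun n => ∑ ℓ ∈ Finset.range n, ψ ℓ ω with hΨf
  set Sf : ℕ → ℝ := fun n => ∑ ℓ ∈ Finset.range n, X ℓ ω with hSf
  set Tf : ℕ → ℝ := fun n => ∑ ℓ ∈ Finset.range n, X ℓ ω * ξ ℓ ω with hTf
  set bf : ℕ → ℝ := fun n => max 1 (1 + Ψf n) with hbf
  have hΨnn : ∀ n, 0 ≤ Ψf n := fun n => Finset.sum_nonneg fun ℓ _ => (h01 ℓ).1
  have hΨsucc : ∀ n, Ψf (n+1) = Ψf n + ψ n ω := fun n => Finset.sum_range_succ _ n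
  have hSsucc : ∀ n, Sf (n+1) = Sf n + X n ω := fun n => Finset.sum_range_succ _ n
  have hΨstep : ∀ n, Ψf n ≤ Ψf (n+1) := by
    intro n
    rw [hΨsucc n]
    linarith [(h01 n).1]
  have hΨmono : Monotone Ψf := monotone_nat_of_le_succ hΨstep
  have hSstep : ∀ n, Sf n ≤ Sf (n+1) := by
    intro n
    rw [hSsucc n]
    linarith [hX0 n ω]
  have hSmono : Monotone Sf := monotone_nat_of_le_succ hSstep
  have hbf1 : ∀ n, 1 ≤ bf n := fun n => le_max_left _ _
  have hbfpos : ∀ n, 0 < bf n := fun n => lt_of_lt_of_le one_pos (hbf1 n)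
  have hbfΔ : ∀ n, bf n ≤ bf (n+1) := fun n => max_le_max le_rfl (by linarith [hΨstep n])
  have hbfeq : ∀ n, bf n = 1 + Ψf n := fun n => max_eq_right (by linarith [hΨnn n])
  have hd1e : ∀ ℓ, d1 ℓ ω = (X ℓ ω - ψ ℓ ω) / bf ℓ := by
    intro ℓ
    rw [hd1def, hbf, hwdef, hΨf]
    rw [div_eq_mul_inv, mul_comm]
  have hd2e : ∀ ℓ, d2 ℓ ω = (X ℓ ω * ξ ℓ ω) / bf ℓ := by
    intro ℓ
    rw [hd2def, hbf, hwdef, hΨf]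
    rw [div_eq_mul_inv]
    ring
  constructor
  · -- part (i)
    intro hΨ
    obtain ⟨c1, hc1⟩ := hc1
    obtain ⟨c2, hc2⟩ := hc2
    have hbft : Tendsto bf atTop atTop := by
      have h' : Tendsto (fun n => 1 + Ψf n) atTop atTop := tendsto_atTop_add_const_left _ 1 hΨ
      exact h'.congr (fun n => (hbfeq n).symm)
    have hk1 : Tendsto (fun n => (Sf n - Ψf n) / bf n) atTop (𝓝 0) := by
      have hconv : Tendsto (fun n => ∑ ℓ ∈ Finset.range n, (X ℓ ω - ψ ℓ ω) / bf ℓ)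
          atTop (𝓝 c1) :=
        hc1.congr (fun n => Finset.sum_congr rfl fun ℓ _ => hd1e ℓ)
      have h := aux_kronecker (fun ℓ => X ℓ ω - ψ ℓ ω) bf hbf1 hbft hbfΔ c1 hconv
      refine h.congr (fun n => ?_)
      rw [Finset.sum_sub_distrib]
    have hk2 : Tendsto (fun n => Tf n / bf n) atTop (𝓝 0) := by
      have hconv : Tendsto (fun n => ∑ ℓ ∈ Finset.range n, (X ℓ ω * ξ ℓ ω) / bf ℓ)
          atTop (𝓝 c2) :=
        hc2.congr (fun n => Finset.sum_congr rfl fun ℓ _ => hd2e ℓ)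
      exact aux_kronecker (fun ℓ => X ℓ ω * ξ ℓ ω) bf hbf1 hbft hbfΔ c2 hconv
    have hΨev : ∀ᶠ n in atTop, 1 ≤ Ψf n := hΨ.eventually_ge_atTop 1
    have hratio : Tendsto (fun n => bf n / Ψf n) atTop (𝓝 1) := by
      have h1 : Tendsto (fun n => (Ψf n)⁻¹) atTop (𝓝 0) := hΨ.inv_tendsto_atTop
      have h2 : Tendsto (fun n => (Ψf n)⁻¹ + 1) atTop (𝓝 (0+1)) :=
        h1.add tendsto_const_nhds
      rw [zero_add] at h2
      refine Tendsto.congr' ?_ h2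
      filter_upwards [hΨev] with n hn
      have hpos : (0:ℝ) < Ψf n := lt_of_lt_of_le one_pos hn
      rw [hbfeq n]
      field_simp
    have hq1 : Tendsto (fun n => (Sf n - Ψf n) / Ψf n) atTop (𝓝 0) := by
      have h := hk1.mul hratio
      rw [zero_mul] at h
      refine Tendsto.congr' ?_ h
      filter_upwards [hΨev] with n hn
      have hpos : (0:ℝ) < Ψf n := lt_of_lt_of_le one_pos hn
      field_simp [(hbfpos n).ne']
    have hq2 : Tendsto (fun n => Tf n / Ψf n) atTop (𝓝 0) := by
      have h := hk2.mul hratio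
      rw [zero_mul] at h
      refine Tendsto.congr' ?_ h
      filter_upwards [hΨev] with n hn
      have hpos : (0:ℝ) < Ψf n := lt_of_lt_of_le one_pos hn
      field_simp [(hbfpos n).ne']
    have hg : Tendsto (fun n => D * |(Sf n - Ψf n) / Ψf n| + (hi - lo) * |Tf n / Ψf n|)
        atTop (𝓝 0) := by
      have h := (hq1.abs.const_mul D).add (hq2.abs.const_mul (hi - lo))
      simpa using h
    refine tendsto_of_tendsto_of_tendsto_of_le_of_le' tendsto_const_nhds hg ?_ ?_
    · filter_upwards with n
      apply Real.sSup_nonneg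
      rintro x ⟨θ, hθ, rfl⟩
      exact div_nonneg (abs_nonneg _) (hΨnn n)
    · filter_upwards [hΨev] with n hn
      have hpos : (0:ℝ) < Ψf n := lt_of_lt_of_le one_pos hn
      apply Real.sSup_le
      · rintro x ⟨θ, hθ, rfl⟩
        have hΛ : (∑ ℓ ∈ Finset.range n, X ℓ ω * (dKL A θstar θ + (θstar - θ) * ξ ℓ ω))
            = dKL A θstar θ * Sf n + (θstar - θ) * Tf n := by
          rw [hSf, hTf]
          simp only [Finset.mul_sum]
          rw [← Finset.sum_add_distrib]
          exact Finset.sum_congr rfl fun ℓ _ => by ring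
        have hnum : |(∑ ℓ ∈ Finset.range n, X ℓ ω * (dKL A θstar θ + (θstar - θ) * ξ ℓ ω))
            - Ψf n * dKL A θstar θ| ≤ D * |Sf n - Ψf n| + (hi - lo) * |Tf n| := by
          rw [hΛ]
          have he : dKL A θstar θ * Sf n + (θstar - θ) * Tf n - Ψf n * dKL A θstar θ
              = dKL A θstar θ * (Sf n - Ψf n) + (θstar - θ) * Tf n := by ring
          rw [he]
          calc |dKL A θstar θ * (Sf n - Ψf n) + (θstar - θ) * Tf n|
              ≤ |dKL A θstar θ * (Sf n - Ψf n)| + |(θstar - θ) * Tf n| := abs_add_le _ _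
            _ = |dKL A θstar θ| * |Sf n - Ψf n| + |θstar - θ| * |Tf n| := by
                rw [abs_mul, abs_mul]
            _ ≤ D * |Sf n - Ψf n| + (hi - lo) * |Tf n| := by
                have h1 := hDb θ hθ
                have h2 := hθdiff θ hθ
                have h3 := abs_nonneg (Sf n - Ψf n)
                have h4 := abs_nonneg (Tf n)
                nlinarith [abs_nonneg (dKL A θstar θ), abs_nonneg (θstar - θ)]
        calc |(∑ ℓ ∈ Finset.range n, X ℓ ω * (dKL A θstar θ + (θstar - θ) * ξ ℓ ω))
            - Ψf n * dKL A θstar θ| / Ψf n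
            ≤ (D * |Sf n - Ψf n| + (hi - lo) * |Tf n|) / Ψf n := by gcongr
          _ = D * |(Sf n - Ψf n) / Ψf n| + (hi - lo) * |Tf n / Ψf n| := by
              rw [abs_div, abs_div, abs_of_pos hpos, add_div, mul_div_assoc, mul_div_assoc]
      · exact add_nonneg (mul_nonneg hD0 (abs_nonneg _)) (mul_nonneg hKnn (abs_nonneg _))
  · -- part (ii)
    rintro ⟨L, hL⟩
    have hΨleL : ∀ n, Ψf n ≤ L := hΨmono.ge_of_tendsto hL
    have hL0 : 0 ≤ L := le_trans (hΨnn 0) (hΨleL 0)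
    have hnotΨ : ¬ Tendsto Ψf atTop atTop := not_tendsto_atTop_of_tendsto_nhds hL
    have hnotS : ¬ Tendsto Sf atTop atTop := fun h => hnotΨ (hbc.1 h)
    have hSbdd : BddAbove (Set.range Sf) := by
      by_contra h
      exact hnotS (tendsto_atTop_atTop_of_monotone' hSmono h)
    obtain ⟨M, hM⟩ := hSbdd
    have hfin : ∃ N, ∀ ℓ, N ≤ ℓ → X ℓ ω = 0 := by
      by_contra h
      push_neg at h
      have hgrow : ∀ m : ℕ, ∃ n, (m : ℝ) ≤ Sf n := by
        intro m
        induction m with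
        | zero => exact ⟨0, by rw [hSf]; simp⟩
        | succ m ih =>
          obtain ⟨n, hn⟩ := ih
          obtain ⟨ℓ, hℓn, hℓ1⟩ := h n
          have hXone : X ℓ ω = 1 := (hX01 ℓ ω).resolve_left hℓ1
          refine ⟨ℓ+1, ?_⟩
          have h2 : Sf n ≤ Sf ℓ := hSmono hℓn
          have h3 := hSsucc ℓ
          push_cast
          rw [h3, hXone]
          linarith
      obtain ⟨m, hm⟩ := exists_nat_gt M
      obtain ⟨n, hn⟩ := hgrow m
      have := hM (Set.mem_range_self n)
      linarith
    obtain ⟨N, hN⟩ := hfin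
    refine ⟨(∑ ℓ ∈ Finset.range N, (D + (hi - lo) * |ξ ℓ ω|)) + L * D, ?_⟩
    intro n θ hθ
    have hterm : ∀ ℓ, |X ℓ ω * (dKL A θstar θ + (θstar - θ) * ξ ℓ ω)|
        ≤ X ℓ ω * (D + (hi - lo) * |ξ ℓ ω|) := by
      intro ℓ
      rw [abs_mul, abs_of_nonneg (hX0 ℓ ω)]
      refine mul_le_mul_of_nonneg_left ?_ (hX0 ℓ ω)
      calc |dKL A θstar θ + (θstar - θ) * ξ ℓ ω|
          ≤ |dKL A θstar θ| + |θstar - θ| * |ξ ℓ ω| := by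
            refine (abs_add_le _ _).trans ?_
            rw [abs_mul]
        _ ≤ D + (hi - lo) * |ξ ℓ ω| := by
            have h1 := hDb θ hθ
            have h2 := hθdiff θ hθ
            have h3 := abs_nonneg (ξ ℓ ω)
            nlinarith [abs_nonneg (θstar - θ)]
    have htnn : ∀ ℓ, 0 ≤ X ℓ ω * (D + (hi - lo) * |ξ ℓ ω|) := by
      intro ℓ
      refine mul_nonneg (hX0 ℓ ω) ?_
      have := abs_nonneg (ξ ℓ ω)
      nlinarith
    have habs : |∑ ℓ ∈ Finset.range n, X ℓ ω * (dKL A θstar θ + (θstar - θ) * ξ ℓ ω)|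
        ≤ ∑ ℓ ∈ Finset.range N, (D + (hi - lo) * |ξ ℓ ω|) := by
      calc |∑ ℓ ∈ Finset.range n, X ℓ ω * (dKL A θstar θ + (θstar - θ) * ξ ℓ ω)|
          ≤ ∑ ℓ ∈ Finset.range n, |X ℓ ω * (dKL A θstar θ + (θstar - θ) * ξ ℓ ω)| :=
            Finset.abs_sum_le_sum_abs _ _
        _ ≤ ∑ ℓ ∈ Finset.range n, X ℓ ω * (D + (hi - lo) * |ξ ℓ ω|) :=
            Finset.sum_le_sum fun ℓ _ => hterm ℓ
        _ ≤ ∑ ℓ ∈ Finset.range (max n N), X ℓ ω * (D + (hi - lo) * |ξ ℓ ω|) :=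
            Finset.sum_le_sum_of_subset_of_nonneg
              (Finset.range_subset_range.2 (le_max_left n N)) (fun ℓ _ _ => htnn ℓ)
        _ = ∑ ℓ ∈ Finset.range N, X ℓ ω * (D + (hi - lo) * |ξ ℓ ω|) := by
            rw [← Finset.sum_range_add_sum_Ico _ (le_max_right n N)]
            have hz : ∑ ℓ ∈ Finset.Ico N (max n N), X ℓ ω * (D + (hi - lo) * |ξ ℓ ω|) = 0 :=
              Finset.sum_eq_zero fun ℓ hℓ => by
                rw [hN ℓ (Finset.mem_Ico.1 hℓ).1, zero_mul]
            rw [hz, add_zero]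
        _ ≤ ∑ ℓ ∈ Finset.range N, (D + (hi - lo) * |ξ ℓ ω|) := by
            refine Finset.sum_le_sum fun ℓ _ => ?_
            have h1 := hX1 ℓ ω
            have h2 : (0:ℝ) ≤ D + (hi - lo) * |ξ ℓ ω| := by
              have := abs_nonneg (ξ ℓ ω)
              nlinarith
            nlinarith [hX0 ℓ ω]
    have hsec : Ψf n * dKL A θstar θ ≤ L * D := by
      have hd : dKL A θstar θ ≤ D := le_of_abs_le (hDb θ hθ)
      have h1 : Ψf n * dKL A θstar θ ≤ Ψf n * D :=
        mul_le_mul_of_nonneg_left hd (hΨnn n)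
      have h2 : Ψf n * D ≤ L * D := mul_le_mul_of_nonneg_right (hΨleL n) hD0
      linarith
    linarith [habs, hsec]
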